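/- Let d ∈ {1,2} and α ∈ (0,2]. Define p : ℤ^d → ℝ by p(x) = c·(1 + |x|^{d+α})^{−1}, with |·| the Euclidean norm and c > 0 the constant making Σ_{x∈ℤ^d} p(x) = 1, and φ(θ) = Σ_{x∈ℤ^d} p(x)·cos(x·θ). Then there exist constants c₁ > 0, C < ∞ and n₀ ∈ ℕ such that for all integers n ≥ n₀, with the truncated kernel Q_n(x) := p(x)·1_{{|x| ≤ c₁·n}}, the series Σ_{k=0}^∞ Q_n^{*k}(0) converges and satisfies Σ_{k=0}^∞ Q_n^{*k}(0) ≤ C·∫_{[−π,π]^d} dθ / (n^{−α} + 1 − φ(θ)), where Q_n^{*k} denotes the k-fold convolution of Q_n on ℤ^d (with Q_n^{*0} = δ_0 the indicator of 0). -/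

import Mathlib

open MeasureTheory

/-- Euclidean norm of a point of `ℤ^d`. -/
noncomputable def znorm (d : ℕ) (x : Fin d → ℤ) : ℝ :=
  Real.sqrt (∑ i, ((x i : ℝ)) ^ 2)

/-- The jump probability `p(x) = c (1 + |x|^{d+α})⁻¹` on `ℤ^d`. -/
noncomputable def jumpP (d : ℕ) (α c : ℝ) (x : Fin d → ℤ) : ℝ :=
  c / (1 + znorm d x ^ ((d : ℝ) + α))

/-- The characteristic function `φ(θ) = Σ_{x∈ℤ^d} p(x) cos(x·θ)`. -/
noncomputable def charFn (d : ℕ) (α c : ℝ) (θ : EuclideanSpace ℝ (Fin d)) : ℝ :=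
  ∑' x : Fin d → ℤ, jumpP d α c x * Real.cos (∑ i, (x i : ℝ) * θ i)

/-- Convolution of two kernels on `ℤ^d`. -/
noncomputable def convZ (d : ℕ) (Q R : (Fin d → ℤ) → ℝ) (x : Fin d → ℤ) : ℝ :=
  ∑' y : Fin d → ℤ, Q y * R (x - y)

/-- `k`-fold convolution power of a kernel on `ℤ^d`, with `Q^{*0} = δ_0`. -/
noncomputable def convPow (d : ℕ) (Q : (Fin d → ℤ) → ℝ) : ℕ → (Fin d → ℤ) → ℝ
  | 0 => fun x => if x = 0 then 1 else 0
  | k + 1 => convZ d (convPow d Q k) Q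

/-- The truncated kernel `Q_n(x) = p(x)·1_{|x| ≤ c₁ n}`. -/
noncomputable def truncP (d : ℕ) (α c c₁ : ℝ) (n : ℕ) (x : Fin d → ℤ) : ℝ :=
  if znorm d x ≤ c₁ * n then jumpP d α c x else 0

namespace TGF

open Pointwise Real

variable {d : ℕ}

lemma znorm_nonneg (x : Fin d → ℤ) : 0 ≤ znorm d x := Real.sqrt_nonneg _

lemma znorm_neg (x : Fin d → ℤ) : znorm d (-x) = znorm d x := by
  unfold znorm; congr 1; apply Finset.sum_congr rfl; intro i _
  push_cast [Pi.neg_apply]; ring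

lemma abs_coord_le_znorm (x : Fin d → ℤ) (i : Fin d) : |(x i : ℝ)| ≤ znorm d x := by
  rw [← Real.sqrt_sq_eq_abs]
  apply Real.sqrt_le_sqrt
  exact Finset.single_le_sum (f := fun j => ((x j : ℝ))^2) (fun j _ => sq_nonneg _)
    (Finset.mem_univ i)

lemma jumpP_pos' {α c : ℝ} (hc : 0 < c) (x : Fin d → ℤ) : 0 < jumpP d α c x := by
  apply div_pos hc
  have h := Real.rpow_nonneg (Real.sqrt_nonneg (∑ i, ((x i : ℝ)) ^ 2)) ((d : ℝ) + α)
  unfold znorm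
  linarith

lemma jumpP_neg {α c : ℝ} (x : Fin d → ℤ) : jumpP d α c (-x) = jumpP d α c x := by
  unfold jumpP; rw [znorm_neg]

/-- box of side 2m -/
noncomputable def boxZ (d m : ℕ) : Finset (Fin d → ℤ) := Fintype.piFinset fun _ => Finset.Icc (-(m:ℤ)) m

lemma mem_boxZ_of_znorm_le {m : ℕ} {x : Fin d → ℤ} (h : znorm d x ≤ m) : x ∈ boxZ d m := by
  rw [boxZ, Fintype.mem_piFinset]
  intro i
  rw [Finset.mem_Icc, ← abs_le]
  have h1 : |(x i : ℝ)| ≤ (m : ℝ) := (abs_coord_le_znorm x i).trans h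
  have h2 : |((x i : ℤ) : ℝ)| = ((|x i| : ℤ) : ℝ) := by push_cast; rfl
  rw [h2] at h1
  exact_mod_cast h1

/-- support contained in a finset -/
def suppIn (f : (Fin d → ℤ) → ℝ) (A : Finset (Fin d → ℤ)) : Prop :=
  ∀ x, x ∉ A → f x = 0

lemma convZ_eq_sum {f g : (Fin d → ℤ) → ℝ} {A : Finset (Fin d → ℤ)}
    (hf : suppIn f A) (x : Fin d → ℤ) :
    convZ d f g x = ∑ y ∈ A, f y * g (x - y) :=
  tsum_eq_sum (fun y hy => by rw [hf y hy, zero_mul])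

lemma suppIn_convZ {f g : (Fin d → ℤ) → ℝ} {A B : Finset (Fin d → ℤ)}
    (hf : suppIn f A) (hg : suppIn g B) : suppIn (convZ d f g) (A + B) := by
  intro x hx
  rw [convZ_eq_sum hf]
  apply Finset.sum_eq_zero
  intro y hy
  by_cases hb : x - y ∈ B
  · exact absurd (by simpa using Finset.add_mem_add hy hb) hx
  · rw [hg _ hb, mul_zero]

lemma sum_shift_le {g : (Fin d → ℤ) → ℝ} {B : Finset (Fin d → ℤ)}
    (hg : suppIn g B) (s : Finset (Fin d → ℤ)) (y : Fin d → ℤ) :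
    ∑ x ∈ s, |g (x - y)| ≤ ∑ z ∈ B, |g z| := by
  have himg : ∑ z ∈ s.image (fun x => x - y), |g z| = ∑ x ∈ s, |g (x - y)| :=
    Finset.sum_image (fun a _ b _ h => by simpa using h)
  rw [← himg]
  rw [show (∑ z ∈ s.image (fun x => x - y), |g z|)
      = ∑ z ∈ s.image (fun x => x - y) ∩ B, |g z| from
    (Finset.sum_subset Finset.inter_subset_left (fun z hz1 hz => by
      by_cases hzB : z ∈ B
      · exact absurd (Finset.mem_inter.mpr ⟨hz1, hzB⟩) hz
      · rw [hg _ hzB, abs_zero])).symm]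
  exact Finset.sum_le_sum_of_subset_of_nonneg Finset.inter_subset_right
    (fun z _ _ => abs_nonneg _)

lemma sum_abs_convZ {f g : (Fin d → ℤ) → ℝ} {A B : Finset (Fin d → ℤ)}
    (hf : suppIn f A) (hg : suppIn g B) :
    ∑ x ∈ A + B, |convZ d f g x| ≤ (∑ y ∈ A, |f y|) * (∑ z ∈ B, |g z|) := by
  calc ∑ x ∈ A + B, |convZ d f g x|
      ≤ ∑ x ∈ A + B, ∑ y ∈ A, |f y| * |g (x - y)| := by
        apply Finset.sum_le_sum
        intro x _
        rw [convZ_eq_sum hf]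
        exact (Finset.abs_sum_le_sum_abs _ _).trans (le_of_eq (by simp [abs_mul]))
    _ = ∑ y ∈ A, |f y| * ∑ x ∈ A + B, |g (x - y)| := by
        rw [Finset.sum_comm]
        exact Finset.sum_congr rfl (fun y _ => by rw [Finset.mul_sum])
    _ ≤ ∑ y ∈ A, |f y| * ∑ z ∈ B, |g z| := by
        apply Finset.sum_le_sum
        intro y _
        exact mul_le_mul_of_nonneg_left (sum_shift_le hg _ y) (abs_nonneg _)
    _ = (∑ y ∈ A, |f y|) * (∑ z ∈ B, |g z|) := (Finset.sum_mul _ _ _).symm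

noncomputable def eC (d : ℕ) (x : Fin d → ℤ) (θ : EuclideanSpace ℝ (Fin d)) : ℂ :=
  Complex.exp (Complex.I * ((∑ i, (x i : ℝ) * θ i : ℝ) : ℂ))

lemma eC_add (x y : Fin d → ℤ) (θ : EuclideanSpace ℝ (Fin d)) :
    eC d (x + y) θ = eC d x θ * eC d y θ := by
  rw [eC, eC, eC, ← Complex.exp_add]
  congr 1
  have : (∑ i, (((x + y) i : ℤ) : ℝ) * θ i) =
      (∑ i, ((x i : ℤ) : ℝ) * θ i) + ∑ i, ((y i : ℤ) : ℝ) * θ i := by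
    rw [← Finset.sum_add_distrib]
    apply Finset.sum_congr rfl
    intro i _
    push_cast [Pi.add_apply]
    ring
  rw [this]
  push_cast
  ring

lemma norm_eC (x : Fin d → ℤ) (θ : EuclideanSpace ℝ (Fin d)) : ‖eC d x θ‖ = 1 := by
  rw [eC, Complex.norm_exp]
  simp [Complex.mul_re]

lemma eC_zero (θ : EuclideanSpace ℝ (Fin d)) : eC d 0 θ = 1 := by
  simp [eC]

lemma hat_convZ {f g : (Fin d → ℤ) → ℝ} {A B : Finset (Fin d → ℤ)}
    (hf : suppIn f A) (hg : suppIn g B) (θ : EuclideanSpace ℝ (Fin d)) :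
    ∑ x ∈ A + B, (convZ d f g x : ℂ) * eC d x θ =
      (∑ y ∈ A, (f y : ℂ) * eC d y θ) * (∑ z ∈ B, (g z : ℂ) * eC d z θ) := by
  rw [Finset.sum_mul_sum]
  calc ∑ x ∈ A + B, (convZ d f g x : ℂ) * eC d x θ
      = ∑ x ∈ A + B, ∑ y ∈ A, ((f y : ℂ) * (g (x - y) : ℂ)) * eC d x θ := by
        apply Finset.sum_congr rfl
        intro x _
        rw [convZ_eq_sum hf, ← Finset.sum_mul]
        push_cast
        ring
    _ = ∑ y ∈ A, ∑ x ∈ A + B, ((f y : ℂ) * (g (x - y) : ℂ)) * eC d x θ := Finset.sum_comm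
    _ = ∑ y ∈ A, ∑ z ∈ B, ((f y : ℂ) * (g z : ℂ)) * eC d (y + z) θ := by
        apply Finset.sum_congr rfl
        intro y hy
        rw [show (∑ x ∈ A + B, ((f y : ℂ) * (g (x - y) : ℂ)) * eC d x θ)
            = ∑ x ∈ B.image (fun z => y + z), ((f y : ℂ) * (g (x - y) : ℂ)) * eC d x θ from
          (Finset.sum_subset
            (fun x hx => by
              obtain ⟨z, hz, rfl⟩ := Finset.mem_image.mp hx
              exact Finset.add_mem_add hy hz)
            (fun x _ hx => by
              have : x - y ∉ B := fun hb => hx (Finset.mem_image.mpr ⟨x - y, hb, by abel⟩)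
              rw [hg _ this]
              push_cast
              ring)).symm]
        rw [Finset.sum_image (fun a _ b _ h => by simpa using h)]
        apply Finset.sum_congr rfl
        intro z _
        simp
    _ = ∑ y ∈ A, ∑ z ∈ B, ((f y : ℂ) * eC d y θ) * ((g z : ℂ) * eC d z θ) := by
        apply Finset.sum_congr rfl (fun y _ => Finset.sum_congr rfl (fun z _ => ?_))
        rw [eC_add]
        ring

lemma cont_coord (i : Fin d) : Continuous fun θ : EuclideanSpace ℝ (Fin d) => θ i :=
  (continuous_apply i).comp (PiLp.continuous_ofLp 2 _)

lemma cont_inner (x : Fin d → ℤ) :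
    Continuous fun θ : EuclideanSpace ℝ (Fin d) => ∑ i, (x i : ℝ) * θ i :=
  continuous_finset_sum _ fun i _ => continuous_const.mul (cont_coord i)

lemma cont_eC (x : Fin d → ℤ) : Continuous (eC d x) :=
  Complex.continuous_exp.comp (continuous_const.mul (Complex.continuous_ofReal.comp
    (cont_inner x)))

def Sbox (d : ℕ) : Set (EuclideanSpace ℝ (Fin d)) :=
  {θ | ∀ i, θ i ∈ Set.Icc (-π) π}

lemma isCompact_Sbox : IsCompact (Sbox d) := by
  have : Sbox d = (EuclideanSpace.equiv (Fin d) ℝ).toHomeomorph ⁻¹'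
      (Set.univ.pi fun _ : Fin d => Set.Icc (-π) π) := by
    ext θ
    show (∀ i, θ i ∈ Set.Icc (-π) π) ↔ _ ∈ Set.univ.pi _
    rw [Set.mem_univ_pi]
    rfl
  rw [this]
  exact (Homeomorph.isCompact_preimage _).mpr (isCompact_univ_pi fun _ => isCompact_Icc)

lemma measurableSet_Sbox : MeasurableSet (Sbox d) :=
  isCompact_Sbox.isClosed.measurableSet

lemma summable_jumpP {α c : ℝ} (hnorm : ∑' x : Fin d → ℤ, jumpP d α c x = 1) :
    Summable (jumpP d α c) := by
  by_contra h
  rw [tsum_eq_zero_of_not_summable h] at hnorm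
  norm_num at hnorm

lemma summable_cos {α c : ℝ} (hc : 0 < c)
    (hp : Summable (jumpP d α c)) (θ : EuclideanSpace ℝ (Fin d)) :
    Summable fun x : Fin d → ℤ => jumpP d α c x * Real.cos (∑ i, (x i : ℝ) * θ i) := by
  apply Summable.of_norm_bounded hp
  intro x
  rw [Real.norm_eq_abs, abs_mul]
  have h1 : 0 < jumpP d α c x := jumpP_pos' hc x
  calc |jumpP d α c x| * |Real.cos _| ≤ |jumpP d α c x| * 1 :=
        mul_le_mul_of_nonneg_left (Real.abs_cos_le_one _) (abs_nonneg _)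
    _ = jumpP d α c x := by rw [mul_one, abs_of_pos h1]

lemma cont_charFn {α c : ℝ} (hc : 0 < c)
    (hp : Summable (jumpP d α c)) : Continuous (charFn d α c) := by
  apply continuous_tsum
    (f := fun (x : Fin d → ℤ) (θ : EuclideanSpace ℝ (Fin d)) =>
      jumpP d α c x * Real.cos (∑ i, (x i : ℝ) * θ i))
    (fun x => continuous_const.mul (Real.continuous_cos.comp (cont_inner x))) hp
  intro x θ
  rw [Real.norm_eq_abs, abs_mul]
  have h1 : 0 < jumpP d α c x := jumpP_pos' hc x
  calc |jumpP d α c x| * |Real.cos _| ≤ |jumpP d α c x| * 1 :=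
        mul_le_mul_of_nonneg_left (Real.abs_cos_le_one _) (abs_nonneg _)
    _ = jumpP d α c x := by rw [mul_one, abs_of_pos h1]

lemma charFn_le_one {α c : ℝ} (hc : 0 < c)
    (hp : Summable (jumpP d α c)) (hnorm : ∑' x : Fin d → ℤ, jumpP d α c x = 1)
    (θ : EuclideanSpace ℝ (Fin d)) : charFn d α c θ ≤ 1 := by
  rw [← hnorm, charFn]
  apply Summable.tsum_le_tsum _ (summable_cos hc hp θ) hp
  intro x
  have h1 : 0 ≤ jumpP d α c x := (jumpP_pos' hc x).le
  calc jumpP d α c x * Real.cos _ ≤ jumpP d α c x * 1 :=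
        mul_le_mul_of_nonneg_left (Real.cos_le_one _) h1
    _ = jumpP d α c x := mul_one _

/-- one-dimensional Fourier orthogonality on [-π, π] -/
lemma integral_exp_Icc (m : ℤ) :
    ∫ t in Set.Icc (-π) π, Complex.exp (Complex.I * m * t) =
      if m = 0 then ((2 * π : ℝ) : ℂ) else 0 := by
  have hle : -π ≤ π := by linarith [pi_pos]
  rw [MeasureTheory.integral_Icc_eq_integral_Ioc,
    ← intervalIntegral.integral_of_le hle]
  by_cases hm : m = 0
  · subst hm
    simp only [Int.cast_zero, mul_zero, zero_mul, Complex.exp_zero, if_true]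
    rw [intervalIntegral.integral_const]
    push_cast
    simp [sub_neg_eq_add]
    ring
  · rw [if_neg hm]
    have hc : (Complex.I * m : ℂ) ≠ 0 := by
      simp [Complex.I_ne_zero, Complex.ext_iff]
      exact_mod_cast hm
    have := integral_exp_mul_complex (a := -π) (b := π) hc
    simp only [mul_assoc] at this ⊢
    rw [this]
    have key : Complex.exp (Complex.I * (m * (π : ℂ))) =
        Complex.exp (Complex.I * (m * ((-π : ℝ) : ℂ))) := by
      have harg : Complex.I * (m * (π : ℂ)) =
          Complex.I * (m * ((-π : ℝ) : ℂ)) + m * (2 * π * Complex.I) := by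
        push_cast
        ring
      rw [harg, Complex.exp_add, Complex.exp_int_mul_two_pi_mul_I, mul_one]
    rw [key, sub_self, zero_div]

lemma integral_eC (x : Fin d → ℤ) :
    ∫ θ in Sbox d, eC d x θ = if x = 0 then (((2 * π) ^ d : ℝ) : ℂ) else 0 := by
  have hmp : MeasurePreserving ((MeasurableEquiv.toLp 2 (Fin d → ℝ)))
      (volume : Measure (Fin d → ℝ)) volume :=
    (EuclideanSpace.volume_preserving_symm_measurableEquiv_toLp (Fin d)).symm
  have hemb := (MeasurableEquiv.toLp 2 (Fin d → ℝ)).measurableEmbedding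
  have hpre : ((MeasurableEquiv.toLp 2 (Fin d → ℝ))) ⁻¹' (Sbox d) =
      Set.univ.pi (fun _ : Fin d => Set.Icc (-π) π) := by
    ext a
    simp only [Set.mem_preimage, Sbox, Set.mem_setOf_eq, Set.mem_univ_pi]
    rfl
  rw [← hmp.setIntegral_preimage_emb hemb, hpre]
  have hsplit : ∀ a : Fin d → ℝ,
      eC d x ((MeasurableEquiv.toLp 2 (Fin d → ℝ)) a) =
        ∏ i, Complex.exp (Complex.I * (x i : ℂ) * (a i : ℂ)) := by
    intro a
    rw [eC, ← Complex.exp_sum]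
    congr 1
    push_cast
    rw [Finset.mul_sum]
    refine Finset.sum_congr rfl (fun i _ => ?_)
    show Complex.I * ((x i : ℂ) * ((a i : ℝ) : ℂ)) = _
    ring
  simp only [hsplit]
  rw [← MeasureTheory.integral_indicator (MeasurableSet.univ_pi (fun i => measurableSet_Icc))]
  have hind : (Set.univ.pi fun _ : Fin d => Set.Icc (-π) π).indicator
        (fun a : Fin d → ℝ => ∏ i, Complex.exp (Complex.I * (x i : ℂ) * (a i : ℂ)))
      = fun a : Fin d → ℝ => ∏ i,
          (Set.Icc (-π) π).indicator
            (fun t : ℝ => Complex.exp (Complex.I * (x i : ℂ) * (t : ℂ))) (a i) := by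
    funext a
    by_cases ha : a ∈ Set.univ.pi fun _ : Fin d => Set.Icc (-π) π
    · rw [Set.indicator_of_mem ha]
      exact (Finset.prod_congr rfl (fun i _ => by
        rw [Set.indicator_of_mem (ha i (Set.mem_univ i))])).symm
    · rw [Set.indicator_of_notMem ha]
      rw [Set.mem_univ_pi] at ha
      push_neg at ha
      obtain ⟨i, hi⟩ := ha
      exact (Finset.prod_eq_zero (Finset.mem_univ i)
        (by rw [Set.indicator_of_notMem hi])).symm
  rw [hind]
  rw [MeasureTheory.integral_fintype_prod_volume_eq_prod (ι := Fin d)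
    (f := fun i (t : ℝ) => (Set.Icc (-π) π).indicator
      (fun t : ℝ => Complex.exp (Complex.I * (x i : ℂ) * (t : ℂ))) t)]
  have hone : ∀ i, (∫ t : ℝ, (Set.Icc (-π) π).indicator
      (fun t : ℝ => Complex.exp (Complex.I * (x i : ℂ) * (t : ℂ))) t)
      = if x i = 0 then ((2 * π : ℝ) : ℂ) else 0 := by
    intro i
    rw [MeasureTheory.integral_indicator measurableSet_Icc]
    exact integral_exp_Icc (x i)
  simp only [hone]
  by_cases hx : x = 0
  · subst hx
    simp only [Pi.zero_apply, if_true, Finset.prod_const, Finset.card_univ, Fintype.card_fin]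
    push_cast
    ring
  · obtain ⟨i, hi⟩ : ∃ i, x i ≠ 0 := by
      by_contra h
      push_neg at h
      exact hx (funext h)
    rw [if_neg hx]
    exact Finset.prod_eq_zero (Finset.mem_univ i) (by rw [if_neg hi])

noncomputable def psiFn (d : ℕ) (Q : (Fin d → ℤ) → ℝ) (A : Finset (Fin d → ℤ))
    (θ : EuclideanSpace ℝ (Fin d)) : ℂ :=
  ∑ x ∈ A, (Q x : ℂ) * eC d x θ

lemma conv_induction {Q : (Fin d → ℤ) → ℝ} {A : Finset (Fin d → ℤ)} (hQ : suppIn Q A) (k : ℕ) :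
    ∃ B : Finset (Fin d → ℤ), suppIn (convPow d Q k) B ∧
      (∀ θ, ∑ x ∈ B, ((convPow d Q k x : ℝ) : ℂ) * eC d x θ = (psiFn d Q A θ) ^ k) ∧
      (∑ x ∈ B, |convPow d Q k x| ≤ (∑ x ∈ A, |Q x|) ^ k) := by
  induction k with
  | zero =>
    refine ⟨{0}, fun x hx => ?_, fun θ => ?_, ?_⟩
    · have : x ≠ 0 := by simpa using hx
      simp [convPow, this]
    · simp [convPow, eC_zero]
    · simp [convPow]
  | succ k ih =>
    obtain ⟨B, hB, hhat, hl1⟩ := ih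
    refine ⟨B + A, suppIn_convZ hB hQ, fun θ => ?_, ?_⟩
    · show ∑ x ∈ B + A, ((convZ d (convPow d Q k) Q x : ℝ) : ℂ) * eC d x θ = _
      rw [hat_convZ hB hQ θ, hhat θ, pow_succ]
      rfl
    · calc ∑ x ∈ B + A, |convZ d (convPow d Q k) Q x|
          ≤ (∑ x ∈ B, |convPow d Q k x|) * (∑ x ∈ A, |Q x|) := sum_abs_convZ hB hQ
        _ ≤ (∑ x ∈ A, |Q x|) ^ k * (∑ x ∈ A, |Q x|) := by
            apply mul_le_mul_of_nonneg_right hl1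
            exact Finset.sum_nonneg fun x _ => abs_nonneg _
        _ = (∑ x ∈ A, |Q x|) ^ (k + 1) := (pow_succ _ _).symm

lemma abs_convPow_zero_le {Q : (Fin d → ℤ) → ℝ} {A : Finset (Fin d → ℤ)}
    (hQ : suppIn Q A) (k : ℕ) : |convPow d Q k 0| ≤ (∑ x ∈ A, |Q x|) ^ k := by
  obtain ⟨B, hB, _, hl1⟩ := conv_induction hQ k
  by_cases h0 : (0 : Fin d → ℤ) ∈ B
  · exact le_trans (Finset.single_le_sum (f := fun x => |convPow d Q k x|)
      (fun x _ => abs_nonneg _) h0) hl1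
  · rw [hB 0 h0, abs_zero]
    positivity

lemma norm_psiFn_le {Q : (Fin d → ℤ) → ℝ} {A : Finset (Fin d → ℤ)}
    (θ : EuclideanSpace ℝ (Fin d)) : ‖psiFn d Q A θ‖ ≤ ∑ x ∈ A, |Q x| := by
  refine (norm_sum_le _ _).trans (le_of_eq (Finset.sum_congr rfl fun x _ => ?_))
  rw [norm_mul, norm_eC, mul_one, Complex.norm_real, Real.norm_eq_abs]

lemma cont_psiFn {Q : (Fin d → ℤ) → ℝ} {A : Finset (Fin d → ℤ)} :
    Continuous (psiFn d Q A) :=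
  continuous_finset_sum _ fun x _ => continuous_const.mul (cont_eC x)

lemma integral_psiFn_pow {Q : (Fin d → ℤ) → ℝ} {A : Finset (Fin d → ℤ)}
    (hQ : suppIn Q A) (k : ℕ) :
    ∫ θ in Sbox d, (psiFn d Q A θ) ^ k =
      ((convPow d Q k 0 : ℝ) : ℂ) * (((2 * π) ^ d : ℝ) : ℂ) := by
  obtain ⟨B, hB, hhat, _⟩ := conv_induction hQ k
  have hint : ∀ x : Fin d → ℤ, IntegrableOn
      (fun θ => ((convPow d Q k x : ℝ) : ℂ) * eC d x θ) (Sbox d) volume :=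
    fun x => (continuous_const.mul (cont_eC x)).continuousOn.integrableOn_compact isCompact_Sbox
  calc ∫ θ in Sbox d, (psiFn d Q A θ) ^ k
      = ∫ θ in Sbox d, ∑ x ∈ B, ((convPow d Q k x : ℝ) : ℂ) * eC d x θ := by
        apply setIntegral_congr_fun measurableSet_Sbox
        intro θ _
        exact (hhat θ).symm
    _ = ∑ x ∈ B, ∫ θ in Sbox d, ((convPow d Q k x : ℝ) : ℂ) * eC d x θ :=
        integral_finset_sum B (fun x _ => hint x)
    _ = ∑ x ∈ B, ((convPow d Q k x : ℝ) : ℂ) * ∫ θ in Sbox d, eC d x θ := by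
        exact Finset.sum_congr rfl fun x _ => integral_const_mul _ _
    _ = ∑ x ∈ B, (if x = 0 then ((convPow d Q k x : ℝ) : ℂ) * (((2 * π) ^ d : ℝ) : ℂ) else 0) := by
        refine Finset.sum_congr rfl fun x _ => ?_
        rw [integral_eC]
        by_cases hx : x = 0 <;> simp [hx]
    _ = ((convPow d Q k 0 : ℝ) : ℂ) * (((2 * π) ^ d : ℝ) : ℂ) := by
        rw [Finset.sum_ite_eq' B 0
          (fun x => ((convPow d Q k x : ℝ) : ℂ) * (((2 * π) ^ d : ℝ) : ℂ))]
        by_cases h0 : (0 : Fin d → ℤ) ∈ B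
        · rw [if_pos h0]
        · rw [if_neg h0, hB 0 h0]
          simp

lemma green_identity {Q : (Fin d → ℤ) → ℝ} {A : Finset (Fin d → ℤ)}
    (hQ : suppIn Q A) (hs : ∑ x ∈ A, |Q x| < 1) :
    Summable (fun k : ℕ => convPow d Q k 0) ∧
    (((∑' k : ℕ, convPow d Q k 0) * ((2 * π) ^ d) : ℝ) : ℂ) =
      ∫ θ in Sbox d, (1 - psiFn d Q A θ)⁻¹ := by
  set s : ℝ := ∑ x ∈ A, |Q x| with hs_def
  have hs0 : 0 ≤ s := Finset.sum_nonneg fun x _ => abs_nonneg _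
  have hsum : Summable (fun k : ℕ => convPow d Q k 0) := by
    apply Summable.of_norm_bounded (summable_geometric_of_lt_one hs0 hs)
    intro k
    rw [Real.norm_eq_abs]
    exact abs_convPow_zero_le hQ k
  refine ⟨hsum, ?_⟩
  have hθnorm : ∀ θ, ‖psiFn d Q A θ‖ ≤ s := fun θ => norm_psiFn_le θ
  have hgeom : ∀ θ : EuclideanSpace ℝ (Fin d),
      ∑' k : ℕ, (psiFn d Q A θ) ^ k = (1 - psiFn d Q A θ)⁻¹ :=
    fun θ => tsum_geometric_of_norm_lt_one ((hθnorm θ).trans_lt hs)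
  have hvol : (volume (Sbox d)) < ⊤ := isCompact_Sbox.measure_lt_top
  have hIntPow : ∀ k : ℕ, IntegrableOn (fun θ => (psiFn d Q A θ) ^ k) (Sbox d) volume :=
    fun k => (cont_psiFn.pow k).continuousOn.integrableOn_compact isCompact_Sbox
  have hIntNorm : Summable fun k : ℕ => ∫ θ in Sbox d, ‖(psiFn d Q A θ) ^ k‖ := by
    apply Summable.of_nonneg_of_le
      (fun k => integral_nonneg fun θ => norm_nonneg _)
      (fun k => ?_)
      ((summable_geometric_of_lt_one hs0 hs).mul_right (volume (Sbox d)).toReal)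
    calc ∫ θ in Sbox d, ‖(psiFn d Q A θ) ^ k‖
        ≤ ∫ θ in Sbox d, s ^ k := by
          apply setIntegral_mono_on (hIntPow k).norm (integrableOn_const hvol.ne)
            measurableSet_Sbox
          intro θ _
          rw [norm_pow]
          exact pow_le_pow_left₀ (norm_nonneg _) (hθnorm θ) k
      _ = s ^ k * (volume (Sbox d)).toReal := by
          rw [setIntegral_const, smul_eq_mul, mul_comm]; rfl
  have hswap := integral_tsum_of_summable_integral_norm
    (F := fun (k : ℕ) (θ : EuclideanSpace ℝ (Fin d)) => (psiFn d Q A θ) ^ k)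
    (μ := volume.restrict (Sbox d)) hIntPow hIntNorm
  have hLHS : ∑' k : ℕ, ∫ θ in Sbox d, (psiFn d Q A θ) ^ k =
      (((∑' k : ℕ, convPow d Q k 0) * ((2 * π) ^ d) : ℝ) : ℂ) := by
    have h1 : ∀ k : ℕ, (∫ θ in Sbox d, (psiFn d Q A θ) ^ k) =
        ((convPow d Q k 0 : ℝ) : ℂ) * (((2 * π) ^ d : ℝ) : ℂ) := integral_psiFn_pow hQ
    rw [tsum_congr h1, tsum_mul_right, Complex.ofReal_mul]
    congr 1
    simpa using (Complex.ofRealCLM.map_tsum hsum).symm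
  calc (((∑' k : ℕ, convPow d Q k 0) * ((2 * π) ^ d) : ℝ) : ℂ)
      = ∑' k : ℕ, ∫ θ in Sbox d, (psiFn d Q A θ) ^ k := hLHS.symm
    _ = ∫ θ in Sbox d, ∑' k : ℕ, (psiFn d Q A θ) ^ k := hswap
    _ = ∫ θ in Sbox d, (1 - psiFn d Q A θ)⁻¹ :=
        setIntegral_congr_fun measurableSet_Sbox fun θ _ => hgeom θ

lemma sum_neg_inner (x : Fin d → ℤ) (θ : EuclideanSpace ℝ (Fin d)) :
    (∑ i, ((-x) i : ℝ) * θ i) = -∑ i, (x i : ℝ) * θ i := by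
  rw [← Finset.sum_neg_distrib]
  apply Finset.sum_congr rfl
  intro i _
  push_cast [Pi.neg_apply]
  ring

lemma psiFn_real {Q : (Fin d → ℤ) → ℝ} {A : Finset (Fin d → ℤ)}
    (hAsym : ∀ x ∈ A, -x ∈ A) (hQsym : ∀ x, Q (-x) = Q x)
    (θ : EuclideanSpace ℝ (Fin d)) :
    psiFn d Q A θ = ((∑ x ∈ A, Q x * Real.cos (∑ i, (x i : ℝ) * θ i) : ℝ) : ℂ) := by
  have hsin : ∑ x ∈ A, Q x * Real.sin (∑ i, (x i : ℝ) * θ i) = 0 := by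
    have hrev : ∑ x ∈ A, Q x * Real.sin (∑ i, (x i : ℝ) * θ i) =
        ∑ x ∈ A, -(Q x * Real.sin (∑ i, (x i : ℝ) * θ i)) := by
      refine Finset.sum_nbij' (i := fun x => -x) (j := fun x => -x)
        (fun x hx => hAsym x hx) (fun x hx => hAsym x hx)
        (fun x _ => by simp) (fun x _ => by simp) (fun x hx => ?_)
      rw [hQsym, sum_neg_inner, Real.sin_neg]
      ring
    have := hrev
    rw [Finset.sum_neg_distrib] at this
    linarith
  have hterm : ∀ x : Fin d → ℤ, (Q x : ℂ) * eC d x θ =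
      ((Q x * Real.cos (∑ i, (x i : ℝ) * θ i) : ℝ) : ℂ) +
      ((Q x * Real.sin (∑ i, (x i : ℝ) * θ i) : ℝ) : ℂ) * Complex.I := by
    intro x
    rw [eC, mul_comm Complex.I _, Complex.exp_mul_I]
    rw [← Complex.ofReal_cos, ← Complex.ofReal_sin]
    push_cast
    ring
  rw [psiFn]
  calc ∑ x ∈ A, (Q x : ℂ) * eC d x θ
      = ∑ x ∈ A, (((Q x * Real.cos (∑ i, (x i : ℝ) * θ i) : ℝ) : ℂ) +
          ((Q x * Real.sin (∑ i, (x i : ℝ) * θ i) : ℝ) : ℂ) * Complex.I) :=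
        Finset.sum_congr rfl fun x _ => hterm x
    _ = ((∑ x ∈ A, Q x * Real.cos (∑ i, (x i : ℝ) * θ i) : ℝ) : ℂ) +
        ((∑ x ∈ A, Q x * Real.sin (∑ i, (x i : ℝ) * θ i) : ℝ) : ℂ) * Complex.I := by
        rw [Finset.sum_add_distrib, ← Finset.sum_mul]
        push_cast
        ring
    _ = _ := by rw [hsin]; simp

end TGF

set_option maxHeartbeats 1000000 in
/-- the truncated Green function at the origin is bounded by
`C ∫_{[−π,π]^d} dθ/(n^{−α} + 1 − φ(θ))`. -/
theorem truncated_green_function_bound (d : ℕ) (hd : d = 1 ∨ d = 2)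
    (α : ℝ) (hα0 : 0 < α) (hα2 : α ≤ 2)
    (c : ℝ) (hc : 0 < c)
    (hnorm : ∑' x : Fin d → ℤ, jumpP d α c x = 1) :
    ∃ c₁ : ℝ, 0 < c₁ ∧ ∃ C : ℝ, ∃ n₀ : ℕ, ∀ n : ℕ, n₀ ≤ n →
      Summable (fun k : ℕ => convPow d (truncP d α c c₁ n) k 0) ∧
      ∑' k : ℕ, convPow d (truncP d α c c₁ n) k 0 ≤
        C * ∫ θ in {θ : EuclideanSpace ℝ (Fin d) | ∀ i, θ i ∈ Set.Icc (-Real.pi) Real.pi},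
          1 / ((n : ℝ) ^ (-α) + 1 - charFn d α c θ) := by
  classical
  have hd1 : 1 ≤ d := by rcases hd with h | h <;> omega
  have hd2 : d ≤ 2 := by rcases hd with h | h <;> omega
  have hp : Summable (jumpP d α c) := TGF.summable_jumpP hnorm
  have hdα1 : (1 : ℝ) ≤ (d : ℝ) + α := by
    have : (1 : ℝ) ≤ (d : ℝ) := by exact_mod_cast hd1
    linarith
  have hdα0 : (0 : ℝ) ≤ (d : ℝ) + α := by linarith
  set c' : ℝ := c * (6 : ℝ) ^ (-((d : ℝ) + α)) with hc'def
  have hc'pos : 0 < c' := mul_pos hc (Real.rpow_pos_of_pos (by norm_num) _)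
  refine ⟨1, one_pos, 2 + 1 / c', 1, fun n hn => ?_⟩
  have hn1 : (1 : ℝ) ≤ (n : ℝ) := by exact_mod_cast hn
  have hnpos : (0 : ℝ) < (n : ℝ) := by linarith
  -- the support of the truncated kernel
  set A : Finset (Fin d → ℤ) := (TGF.boxZ d n).filter (fun x => znorm d x ≤ 1 * (n : ℝ))
    with hAdef
  set Q : (Fin d → ℤ) → ℝ := truncP d α c 1 n with hQdef
  have hQx : ∀ x, Q x = if znorm d x ≤ 1 * (n : ℝ) then jumpP d α c x else 0 := fun x => rfl
  have hQsupp : TGF.suppIn Q A := by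
    intro x hx
    rw [hQx]
    by_cases h : znorm d x ≤ 1 * (n : ℝ)
    · exact absurd (Finset.mem_filter.mpr
        ⟨TGF.mem_boxZ_of_znorm_le (by rwa [one_mul] at h), h⟩) hx
    · rw [if_neg h]
  have hQmem : ∀ x ∈ A, Q x = jumpP d α c x := fun x hx => by
    rw [hQx, if_pos (Finset.mem_filter.mp hx).2]
  set sA : ℝ := ∑ x ∈ A, jumpP d α c x with hsAdef
  have habs : ∑ x ∈ A, |Q x| = sA :=
    Finset.sum_congr rfl fun x hx => by
      rw [hQmem x hx, abs_of_pos (TGF.jumpP_pos' hc x)]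
  set tC : ℝ := ∑' x : ↑((↑A : Set (Fin d → ℤ))ᶜ), jumpP d α c ↑x with htCdef
  have hsplitC : sA + tC = 1 := by rw [← hnorm]; exact Summable.sum_add_tsum_compl hp
  -- tail lower bound via the block Bf
  set Bf : Finset (Fin d → ℤ) :=
    Fintype.piFinset (fun _ : Fin d => Finset.Icc ((n : ℤ) + 1) (2 * (n : ℤ))) with hBfdef
  have hBfmem : ∀ x ∈ Bf, ∀ i, (n : ℤ) + 1 ≤ x i ∧ x i ≤ 2 * (n : ℤ) := by
    intro x hx i
    have := (Fintype.mem_piFinset.mp hx) i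
    exact Finset.mem_Icc.mp this
  have hBfA : ∀ x ∈ Bf, x ∉ A := by
    intro x hx hxA
    have hcond := (Finset.mem_filter.mp hxA).2
    have i0 : Fin d := ⟨0, by omega⟩
    have h1 := (hBfmem x hx i0).1
    have h2 : (n : ℝ) + 1 ≤ (x i0 : ℝ) := by exact_mod_cast h1
    have h3 : (x i0 : ℝ) ≤ |(x i0 : ℝ)| := le_abs_self _
    have h4 := TGF.abs_coord_le_znorm x i0
    rw [one_mul] at hcond
    linarith
  have hBcard : Bf.card = n ^ d := by
    rw [hBfdef, Fintype.card_piFinset]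
    have hcard : (Finset.Icc ((n : ℤ) + 1) (2 * (n : ℤ))).card = n := by
      rw [Int.card_Icc]
      omega
    calc ∏ _i : Fin d, (Finset.Icc ((n : ℤ) + 1) (2 * (n : ℤ))).card
        = ∏ _i : Fin d, n := Finset.prod_congr rfl fun _ _ => hcard
      _ = n ^ d := by rw [Finset.prod_const, Finset.card_univ, Fintype.card_fin]
  have hplow : ∀ x ∈ Bf, c * ((6 : ℝ) * n) ^ (-((d : ℝ) + α)) ≤ jumpP d α c x := by
    intro x hx
    have hzn : znorm d x ≤ 3 * n := by
      have hsq : ∀ i, ((x i : ℝ)) ^ 2 ≤ (2 * (n : ℝ)) ^ 2 := by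
        intro i
        have h1 := (hBfmem x hx i).1
        have h2 := (hBfmem x hx i).2
        have h1' : (0 : ℝ) ≤ (x i : ℝ) := by
          have : (0 : ℤ) ≤ x i := by omega
          exact_mod_cast this
        have h2' : (x i : ℝ) ≤ 2 * (n : ℝ) := by exact_mod_cast h2
        nlinarith
      have hsum : (∑ i, ((x i : ℝ)) ^ 2) ≤ (3 * (n : ℝ)) ^ 2 := by
        calc (∑ i, ((x i : ℝ)) ^ 2) ≤ ∑ _i : Fin d, (2 * (n : ℝ)) ^ 2 :=
              Finset.sum_le_sum fun i _ => hsq i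
          _ = (d : ℝ) * (2 * (n : ℝ)) ^ 2 := by
              rw [Finset.sum_const, Finset.card_univ, Fintype.card_fin, nsmul_eq_mul]
          _ ≤ (3 * (n : ℝ)) ^ 2 := by
              have : (d : ℝ) ≤ 2 := by exact_mod_cast hd2
              nlinarith
      calc znorm d x ≤ Real.sqrt ((3 * (n : ℝ)) ^ 2) := Real.sqrt_le_sqrt hsum
        _ = 3 * (n : ℝ) := Real.sqrt_sq (by positivity)
    have hrp : znorm d x ^ ((d : ℝ) + α) ≤ (3 * (n : ℝ)) ^ ((d : ℝ) + α) :=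
      Real.rpow_le_rpow (TGF.znorm_nonneg x) hzn hdα0
    have h3n1 : (1 : ℝ) ≤ (3 * (n : ℝ)) ^ ((d : ℝ) + α) := by
      have h31 : (1 : ℝ) ≤ 3 * (n : ℝ) := by linarith
      calc (1 : ℝ) = (3 * (n : ℝ)) ^ (0 : ℝ) := (Real.rpow_zero _).symm
        _ ≤ (3 * (n : ℝ)) ^ ((d : ℝ) + α) :=
            Real.rpow_le_rpow_of_exponent_le h31 hdα0
    have h6split : ((6 : ℝ) * n) ^ ((d : ℝ) + α)
        = (2 : ℝ) ^ ((d : ℝ) + α) * (3 * (n : ℝ)) ^ ((d : ℝ) + α) := by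
      rw [show (6 : ℝ) * n = 2 * (3 * (n : ℝ)) by ring,
        Real.mul_rpow (by norm_num) (by positivity)]
    have h2le : (2 : ℝ) ≤ (2 : ℝ) ^ ((d : ℝ) + α) := by
      calc (2 : ℝ) = (2 : ℝ) ^ (1 : ℝ) := (Real.rpow_one _).symm
        _ ≤ (2 : ℝ) ^ ((d : ℝ) + α) :=
            Real.rpow_le_rpow_of_exponent_le one_le_two hdα1
    have hdenom : 1 + znorm d x ^ ((d : ℝ) + α) ≤ ((6 : ℝ) * n) ^ ((d : ℝ) + α) := by
      rw [h6split]
      nlinarith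
    have hdenomne : c * ((6 : ℝ) * n) ^ (-((d : ℝ) + α)) = c / ((6 : ℝ) * n) ^ ((d : ℝ) + α) := by
      rw [Real.rpow_neg (by positivity), div_eq_mul_inv]
    rw [hdenomne, jumpP]
    apply div_le_div_of_nonneg_left hc.le
    · have := Real.rpow_nonneg (TGF.znorm_nonneg x) ((d : ℝ) + α)
      linarith
    · exact hdenom
  have hsumBf : c' * (n : ℝ) ^ (-α) ≤ ∑ x ∈ Bf, jumpP d α c x := by
    have h1 : Bf.card • (c * ((6 : ℝ) * n) ^ (-((d : ℝ) + α))) ≤ ∑ x ∈ Bf, jumpP d α c x :=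
      Finset.card_nsmul_le_sum Bf _ _ hplow
    rw [hBcard, nsmul_eq_mul] at h1
    have harith : c' * (n : ℝ) ^ (-α)
        = ((n : ℕ) ^ d : ℕ) * (c * ((6 : ℝ) * n) ^ (-((d : ℝ) + α))) := by
      have h6 : ((6 : ℝ) * n) ^ (-((d : ℝ) + α))
          = (6 : ℝ) ^ (-((d : ℝ) + α)) * (n : ℝ) ^ (-((d : ℝ) + α)) :=
        Real.mul_rpow (by norm_num) hnpos.le
      have hnd : ((n : ℝ)) ^ (d : ℕ) * (n : ℝ) ^ (-((d : ℝ) + α)) = (n : ℝ) ^ (-α) := by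
        rw [← Real.rpow_natCast (n : ℝ) d, ← Real.rpow_add hnpos]
        congr 1
        ring
      push_cast
      rw [h6, hc'def, ← hnd]
      ring
    rw [harith]
    exact_mod_cast h1
  have htail_low : c' * (n : ℝ) ^ (-α) ≤ tC := by
    have hdisj : Disjoint A Bf := Finset.disjoint_left.mpr (fun x hxA hxB => hBfA x hxB hxA)
    have hle1 : ∑ x ∈ A ∪ Bf, jumpP d α c x ≤ 1 := by
      rw [← hnorm]
      exact Summable.sum_le_tsum _ (fun x _ => (TGF.jumpP_pos' hc x).le) hp
    rw [Finset.sum_union hdisj] at hle1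
    linarith [hsumBf]
  have htCpos : 0 < tC :=
    lt_of_lt_of_le (by positivity) htail_low
  have hsAlt1 : sA < 1 := by linarith
  obtain ⟨hsumm, hgreen⟩ := TGF.green_identity hQsupp (by rw [habs]; exact hsAlt1)
  refine ⟨hsumm, ?_⟩
  -- symmetry and realness of ψ
  have hAsym : ∀ x ∈ A, -x ∈ A := by
    intro x hx
    have hcond := (Finset.mem_filter.mp hx).2
    refine Finset.mem_filter.mpr ⟨TGF.mem_boxZ_of_znorm_le ?_, ?_⟩
    · rw [TGF.znorm_neg]; rwa [one_mul] at hcond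
    · rw [TGF.znorm_neg]; exact hcond
  have hQsym : ∀ x, Q (-x) = Q x := by
    intro x
    rw [hQx, hQx, TGF.znorm_neg, TGF.jumpP_neg]
  set φA : EuclideanSpace ℝ (Fin d) → ℝ :=
    fun θ => ∑ x ∈ A, Q x * Real.cos (∑ i, (x i : ℝ) * θ i) with hφAdef
  have hpsi : ∀ θ, TGF.psiFn d Q A θ = ((φA θ : ℝ) : ℂ) :=
    fun θ => TGF.psiFn_real hAsym hQsym θ
  have hgreenR : (∑' k : ℕ, convPow d Q k 0) * ((2 * Real.pi) ^ d) =
      ∫ θ in TGF.Sbox d, (1 - φA θ)⁻¹ := by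
    apply Complex.ofReal_injective
    rw [hgreen]
    calc ∫ θ in TGF.Sbox d, (1 - TGF.psiFn d Q A θ)⁻¹
        = ∫ θ in TGF.Sbox d, (((1 - φA θ)⁻¹ : ℝ) : ℂ) := by
          apply setIntegral_congr_fun TGF.measurableSet_Sbox
          intro θ _
          show (1 - TGF.psiFn d Q A θ)⁻¹ = (((1 - φA θ)⁻¹ : ℝ) : ℂ)
          rw [hpsi θ]
          push_cast
          rfl
      _ = (((∫ θ in TGF.Sbox d, (1 - φA θ)⁻¹ : ℝ)) : ℂ) := integral_ofReal
  -- bounds on φA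
  have hcontφA : Continuous φA :=
    continuous_finset_sum _ fun x _ =>
      continuous_const.mul (Real.continuous_cos.comp (TGF.cont_inner x))
  have hφA_le : ∀ θ, φA θ ≤ sA := by
    intro θ
    apply Finset.sum_le_sum
    intro x hx
    rw [hQmem x hx]
    calc jumpP d α c x * Real.cos (∑ i, (x i : ℝ) * θ i) ≤ jumpP d α c x * 1 :=
          mul_le_mul_of_nonneg_left (Real.cos_le_one _) (TGF.jumpP_pos' hc x).le
      _ = jumpP d α c x := mul_one _
  have hlb : ∀ θ, tC ≤ 1 - φA θ := fun θ => by have := hφA_le θ; linarith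
  have h1φApos : ∀ θ, 0 < 1 - φA θ := fun θ => lt_of_lt_of_le htCpos (hlb θ)
  have hcos_sum : ∀ θ : EuclideanSpace ℝ (Fin d),
      Summable (fun x : Fin d → ℤ => jumpP d α c x * Real.cos (∑ i, (x i : ℝ) * θ i)) :=
    TGF.summable_cos hc hp
  have hφle1 : ∀ θ, charFn d α c θ ≤ 1 := TGF.charFn_le_one hc hp hnorm
  have hnα : (0:ℝ) < (n:ℝ) ^ (-α) := Real.rpow_pos_of_pos hnpos _
  have hdenom2 : ∀ θ, 0 < (n:ℝ) ^ (-α) + 1 - charFn d α c θ := fun θ => by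
    have := hφle1 θ; linarith
  have hkey : ∀ θ, (n:ℝ) ^ (-α) + 1 - charFn d α c θ ≤ (2 + 1 / c') * (1 - φA θ) := by
    intro θ
    have hsub : Summable (fun x : Fin d → ℤ =>
        jumpP d α c x - jumpP d α c x * Real.cos (∑ i, (x i : ℝ) * θ i)) :=
      hp.sub (hcos_sum θ)
    have e0 : 1 - charFn d α c θ = ∑' x : Fin d → ℤ,
        (jumpP d α c x - jumpP d α c x * Real.cos (∑ i, (x i : ℝ) * θ i)) := by
      rw [charFn, ← hnorm]
      exact (Summable.tsum_sub hp (hcos_sum θ)).symm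
    have esplit : (∑ x ∈ A, (jumpP d α c x - jumpP d α c x * Real.cos (∑ i, (x i : ℝ) * θ i)))
        + (∑' x : ↑((↑A : Set (Fin d → ℤ))ᶜ),
            (jumpP d α c ↑x - jumpP d α c ↑x * Real.cos (∑ i, ((↑x : Fin d → ℤ) i : ℝ) * θ i)))
        = ∑' x : Fin d → ℤ,
            (jumpP d α c x - jumpP d α c x * Real.cos (∑ i, (x i : ℝ) * θ i)) :=
      Summable.sum_add_tsum_compl hsub
    have eA : (∑ x ∈ A, (jumpP d α c x - jumpP d α c x * Real.cos (∑ i, (x i : ℝ) * θ i)))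
        = sA - φA θ := by
      rw [Finset.sum_sub_distrib]
      congr 1
      exact Finset.sum_congr rfl fun x hx => by rw [hQmem x hx]
    have etail : (∑' x : ↑((↑A : Set (Fin d → ℤ))ᶜ),
        (jumpP d α c ↑x - jumpP d α c ↑x * Real.cos (∑ i, ((↑x : Fin d → ℤ) i : ℝ) * θ i)))
        ≤ 2 * tC := by
      rw [htCdef, ← tsum_mul_left]
      apply Summable.tsum_le_tsum _ (hsub.subtype _) ((hp.mul_left 2).subtype _)
      intro x
      have h1 := TGF.jumpP_pos' (α := α) hc (↑x : Fin d → ℤ)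
      have h2 := Real.neg_one_le_cos (∑ i, ((↑x : Fin d → ℤ) i : ℝ) * θ i)
      have h3 := mul_le_mul_of_nonneg_left h2 h1.le
      simp only [Function.comp_apply]
      linarith
    have e3 : (n:ℝ) ^ (-α) ≤ tC / c' := (le_div_iff₀ hc'pos).mpr (by
      calc (n:ℝ) ^ (-α) * c' = c' * (n:ℝ) ^ (-α) := mul_comm _ _
        _ ≤ tC := htail_low)
    have hXpos : 0 ≤ sA - φA θ := by linarith [hφA_le θ]
    have h1φ : 1 - charFn d α c θ ≤ (sA - φA θ) + 2 * tC := by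
      rw [e0, ← esplit, eA]
      linarith [etail]
    have hfinal : 1 - φA θ = (sA - φA θ) + tC := by linarith
    have h1c : 0 < 1 / c' := by positivity
    have htc : tC / c' = (1 / c') * tC := by ring
    rw [htc] at e3
    rw [hfinal]
    nlinarith [htCpos.le, hXpos, mul_nonneg h1c.le hXpos]
  set I2 : EuclideanSpace ℝ (Fin d) → ℝ :=
    fun θ => 1 / ((n:ℝ) ^ (-α) + 1 - charFn d α c θ) with hI2def
  have hptwise : ∀ θ, (1 - φA θ)⁻¹ ≤ (2 + 1 / c') * I2 θ := by
    intro θ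
    show (1 - φA θ)⁻¹ ≤ (2 + 1 / c') * (1 / ((n:ℝ) ^ (-α) + 1 - charFn d α c θ))
    rw [inv_eq_one_div, mul_one_div, div_le_div_iff₀ (h1φApos θ) (hdenom2 θ)]
    calc 1 * ((n:ℝ) ^ (-α) + 1 - charFn d α c θ)
        = (n:ℝ) ^ (-α) + 1 - charFn d α c θ := one_mul _
      _ ≤ (2 + 1 / c') * (1 - φA θ) := hkey θ
  have hcontφ : Continuous (charFn d α c) := TGF.cont_charFn hc hp
  have hInt1 : IntegrableOn (fun θ => (1 - φA θ)⁻¹) (TGF.Sbox d) volume :=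
    ((continuous_const.sub hcontφA).inv₀
      fun θ => (h1φApos θ).ne').continuousOn.integrableOn_compact TGF.isCompact_Sbox
  have hcontI2 : Continuous I2 := by
    apply Continuous.div continuous_const (continuous_const.sub hcontφ)
    exact fun θ => (hdenom2 θ).ne'
  have hInt2 : IntegrableOn (fun θ => (2 + 1 / c') * I2 θ) (TGF.Sbox d) volume :=
    (continuous_const.mul hcontI2).continuousOn.integrableOn_compact TGF.isCompact_Sbox
  have hIle : (∫ θ in TGF.Sbox d, (1 - φA θ)⁻¹)
      ≤ (2 + 1 / c') * ∫ θ in TGF.Sbox d, I2 θ := by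
    calc (∫ θ in TGF.Sbox d, (1 - φA θ)⁻¹)
        ≤ ∫ θ in TGF.Sbox d, (2 + 1 / c') * I2 θ :=
          setIntegral_mono_on hInt1 hInt2 TGF.measurableSet_Sbox (fun θ _ => hptwise θ)
      _ = (2 + 1 / c') * ∫ θ in TGF.Sbox d, I2 θ := integral_const_mul _ _
  have hJnonneg : 0 ≤ ∫ θ in TGF.Sbox d, (1 - φA θ)⁻¹ :=
    setIntegral_nonneg TGF.measurableSet_Sbox fun θ _ => (inv_nonneg).mpr (h1φApos θ).le
  have hV1 : (1:ℝ) ≤ (2 * Real.pi) ^ d := by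
    apply one_le_pow₀
    nlinarith [Real.pi_gt_three]
  have hVpos : (0:ℝ) < (2 * Real.pi) ^ d := by positivity
  have hTnonneg : 0 ≤ ∑' k : ℕ, convPow d Q k 0 := by
    nlinarith [hgreenR, hJnonneg, hVpos]
  calc ∑' k : ℕ, convPow d Q k 0
      ≤ (∑' k : ℕ, convPow d Q k 0) * ((2 * Real.pi) ^ d) :=
        le_mul_of_one_le_right hTnonneg hV1
    _ = ∫ θ in TGF.Sbox d, (1 - φA θ)⁻¹ := hgreenR
    _ ≤ (2 + 1 / c') * ∫ θ in TGF.Sbox d, I2 θ := hIle
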